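/- Let $\Sigma$ be a surface of revolution $\{x_3=f(\tfrac{x_1^2+x_2^2}{4})\}$ with $f\in C^2$, defined by $u=x_3-f(r)$ where $r=(x_1^2+x_2^2)/4$. Then $\|\nabla_Hu\|=\tfrac12\sqrt{x_1^2+x_2^2}\sqrt{1+f'(r)^2}$ and the sub-Riemannian Gaussian curvature equals $\mathcal{K}_0=-\frac{2}{(x_1^2+x_2^2)(1+f'(r)^2)}+\frac{f'(r)f''(r)}{(1+f'(r)^2)^2}$ at points with $x_1^2+x_2^2>0$. Consequently $\mathcal{K}_0$ is locally integrable with respect to the Heisenberg perimeter measure near the isolated characteristic point at the origin. -/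

import Mathlib

/-- The left-invariant vector field `X₁ = ∂₁ - (x₂/2)∂₃` acting on a function. -/
noncomputable def Xone (f : ℝ × ℝ × ℝ → ℝ) (x : ℝ × ℝ × ℝ) : ℝ :=
  deriv (fun s => f (s, x.2.1, x.2.2)) x.1
    - x.2.1 / 2 * deriv (fun s => f (x.1, x.2.1, s)) x.2.2

/-- The left-invariant vector field `X₂ = ∂₂ + (x₁/2)∂₃` acting on a function. -/
noncomputable def Xtwo (f : ℝ × ℝ × ℝ → ℝ) (x : ℝ × ℝ × ℝ) : ℝ :=
  deriv (fun s => f (x.1, s, x.2.2)) x.2.1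
    + x.1 / 2 * deriv (fun s => f (x.1, x.2.1, s)) x.2.2

/-- The vertical vector field `X₃ = ∂₃` acting on a function. -/
noncomputable def Xthree (f : ℝ × ℝ × ℝ → ℝ) (x : ℝ × ℝ × ℝ) : ℝ :=
  deriv (fun s => f (x.1, x.2.1, s)) x.2.2

/-- Norm of the horizontal gradient `∇_H u = (X₁u, X₂u)`. -/
noncomputable def normH (u : ℝ × ℝ × ℝ → ℝ) (x : ℝ × ℝ × ℝ) : ℝ :=
  Real.sqrt ((Xone u x) ^ 2 + (Xtwo u x) ^ 2)

/-- The sub-Riemannian Gaussian curvature of the surface `{u = 0}`: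
`𝒦₀ = -(X₃u/‖∇_Hu‖)² - (X₂u/‖∇_Hu‖)X₁(X₃u/‖∇_Hu‖) + (X₁u/‖∇_Hu‖)X₂(X₃u/‖∇_Hu‖)`. -/
noncomputable def K0 (u : ℝ × ℝ × ℝ → ℝ) (x : ℝ × ℝ × ℝ) : ℝ :=
  -(Xthree u x / normH u x) ^ 2
    - (Xtwo u x / normH u x) * Xone (fun y => Xthree u y / normH u y) x
    + (Xone u x / normH u x) * Xtwo (fun y => Xthree u y / normH u y) x

open MeasureTheory


section helpers
variable {f : ℝ → ℝ}

/-- derivative of `s ↦ c3 - f ((s^2+c)/4)` -/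
lemma slice_deriv (hf : Differentiable ℝ f) (c c3 s : ℝ) :
    deriv (fun s => c3 - f ((s ^ 2 + c) / 4)) s = -(deriv f ((s ^ 2 + c) / 4)) * (s / 2) := by
  have h1 : HasDerivAt (fun s : ℝ => (s ^ 2 + c) / 4) (s / 2) s := by
    have := ((hasDerivAt_pow 2 s).add_const c).div_const 4
    exact this.congr_deriv (by push_cast; ring)
  have h2 := ((hf ((s ^ 2 + c) / 4)).hasDerivAt.comp s h1).const_sub c3
  exact h2.deriv.trans (by ring)

lemma slice3_deriv (c : ℝ) (s : ℝ) : deriv (fun s : ℝ => s - c) s = 1 := by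
  simpa using ((hasDerivAt_id s).sub_const c).deriv

lemma Xu_one (hf : Differentiable ℝ f) (x : ℝ × ℝ × ℝ) :
    Xone (fun y => y.2.2 - f ((y.1 ^ 2 + y.2.1 ^ 2) / 4)) x
      = -(x.2.1 + x.1 * deriv f ((x.1 ^ 2 + x.2.1 ^ 2) / 4)) / 2 := by
  simp only [Xone]
  rw [slice_deriv hf, slice3_deriv]
  ring

lemma Xu_two (hf : Differentiable ℝ f) (x : ℝ × ℝ × ℝ) :
    Xtwo (fun y => y.2.2 - f ((y.1 ^ 2 + y.2.1 ^ 2) / 4)) x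
      = (x.1 - x.2.1 * deriv f ((x.1 ^ 2 + x.2.1 ^ 2) / 4)) / 2 := by
  simp only [Xtwo]
  have h : (fun s => x.2.2 - f ((x.1 ^ 2 + s ^ 2) / 4)) = (fun s : ℝ => x.2.2 - f ((s ^ 2 + x.1 ^ 2) / 4)) := by
    funext s; ring_nf
  rw [h, slice_deriv hf, slice3_deriv]
  ring_nf

lemma Xu_three (x : ℝ × ℝ × ℝ) :
    Xthree (fun y => y.2.2 - f ((y.1 ^ 2 + y.2.1 ^ 2) / 4)) x = 1 := by
  simp only [Xthree]
  exact slice3_deriv _ _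

lemma normH_eq (hf : Differentiable ℝ f) (x : ℝ × ℝ × ℝ) :
    normH (fun y => y.2.2 - f ((y.1 ^ 2 + y.2.1 ^ 2) / 4)) x
      = (1 / 2) * Real.sqrt (x.1 ^ 2 + x.2.1 ^ 2)
          * Real.sqrt (1 + (deriv f ((x.1 ^ 2 + x.2.1 ^ 2) / 4)) ^ 2) := by
  have h1 := Xu_one hf x
  have h2 := Xu_two hf x
  simp only [normH, h1, h2]
  set a := deriv f ((x.1 ^ 2 + x.2.1 ^ 2) / 4)
  have : (-(x.2.1 + x.1 * a) / 2) ^ 2 + ((x.1 - x.2.1 * a) / 2) ^ 2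
      = (x.1 ^ 2 + x.2.1 ^ 2) * (1 + a ^ 2) / 4 := by ring
  rw [this, show (x.1 ^ 2 + x.2.1 ^ 2) * (1 + a ^ 2) / 4
      = (x.1 ^ 2 + x.2.1 ^ 2) * ((1 + a ^ 2) / 4) by ring,
    Real.sqrt_mul (by positivity)]
  rw [show (1 + a ^ 2) / 4 = (1 + a ^ 2) * (1/2)^2 by ring, Real.sqrt_mul (by positivity),
    Real.sqrt_sq (by norm_num)]
  ring

end helpers

noncomputable def phiF (f : ℝ → ℝ) (t : ℝ) : ℝ :=
  2 / (Real.sqrt t * Real.sqrt (1 + (deriv f (t / 4)) ^ 2))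

section helpers2
variable {f : ℝ → ℝ}

lemma v_eq (hf : Differentiable ℝ f) :
    (fun y : ℝ × ℝ × ℝ => Xthree (fun y => y.2.2 - f ((y.1 ^ 2 + y.2.1 ^ 2) / 4)) y
        / normH (fun y => y.2.2 - f ((y.1 ^ 2 + y.2.1 ^ 2) / 4)) y)
      = fun y => phiF f (y.1 ^ 2 + y.2.1 ^ 2) := by
  funext y
  rw [Xu_three, normH_eq hf, phiF]
  rw [show (1 / 2) * Real.sqrt (y.1 ^ 2 + y.2.1 ^ 2)
        * Real.sqrt (1 + (deriv f ((y.1 ^ 2 + y.2.1 ^ 2) / 4)) ^ 2)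
      = (Real.sqrt (y.1 ^ 2 + y.2.1 ^ 2)
        * Real.sqrt (1 + (deriv f ((y.1 ^ 2 + y.2.1 ^ 2) / 4)) ^ 2)) / 2 by ring,
    one_div_div]

lemma hasDerivAt_phiF (hf : ContDiff ℝ 2 f) {t : ℝ} (ht : 0 < t) :
    HasDerivAt (phiF f)
      (-(2 * (1 + (deriv f (t / 4)) ^ 2) + t * deriv f (t / 4) * deriv (deriv f) (t / 4))
        / (2 * t * Real.sqrt t * (1 + (deriv f (t / 4)) ^ 2)
            * Real.sqrt (1 + (deriv f (t / 4)) ^ 2))) t := by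
  have h2 : ContDiff ℝ (1 + 1) f := by norm_num at hf ⊢; exact hf
  have hd : Differentiable ℝ f := (contDiff_succ_iff_deriv.mp h2).1
  have hd1 : Differentiable ℝ (deriv f) := ((contDiff_succ_iff_deriv.mp h2).2.2).differentiable (by norm_num)
  set a := deriv f (t / 4) with ha'
  set b := deriv (deriv f) (t / 4) with hb'
  have h4 : HasDerivAt (fun t : ℝ => t / 4) (1 / 4) t := (hasDerivAt_id t).div_const 4
  have haD : HasDerivAt (fun t : ℝ => deriv f (t / 4)) (b * (1 / 4)) t :=
    by have := (hd1 (t / 4)).hasDerivAt.comp t h4; exact this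
  have hw2 : HasDerivAt (fun t : ℝ => 1 + (deriv f (t / 4)) ^ 2)
      (2 * a ^ 1 * (b * (1 / 4))) t := (haD.pow 2).const_add 1
  have hw2pos : (0 : ℝ) < 1 + a ^ 2 := by positivity
  have hw : HasDerivAt (fun t : ℝ => Real.sqrt (1 + (deriv f (t / 4)) ^ 2))
      (1 / (2 * Real.sqrt (1 + a ^ 2)) * (2 * a ^ 1 * (b * (1 / 4)))) t :=
    (Real.hasDerivAt_sqrt hw2pos.ne').comp t hw2
  have hs : HasDerivAt Real.sqrt (1 / (2 * Real.sqrt t)) t := Real.hasDerivAt_sqrt ht.ne'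
  have hprod := hs.mul hw
  have hspos : 0 < Real.sqrt t := Real.sqrt_pos.mpr ht
  have hwpos : 0 < Real.sqrt (1 + a ^ 2) := Real.sqrt_pos.mpr hw2pos
  have hne : Real.sqrt t * Real.sqrt (1 + a ^ 2) ≠ 0 := by positivity
  have hphi := (hasDerivAt_const t (2 : ℝ)).div hprod hne
  refine hphi.congr_deriv ?_
  simp only [Pi.mul_apply, ← ha']
  set s := Real.sqrt t with hsdef
  set w := Real.sqrt (1 + a ^ 2) with hwdef
  have hs2 : s ^ 2 = t := Real.sq_sqrt ht.le
  have hw2' : w ^ 2 = 1 + a ^ 2 := Real.sq_sqrt hw2pos.le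
  rw [← hs2, ← hw2']
  have hsne : s ≠ 0 := hspos.ne'
  have hwne : w ≠ 0 := hwpos.ne'
  field_simp
  ring

lemma deriv_phiF_comp (hf : ContDiff ℝ 2 f) (c s0 t : ℝ) (hct : s0 ^ 2 + c = t) (ht : 0 < t) :
    deriv (fun s : ℝ => phiF f (s ^ 2 + c)) s0
      = (-(2 * (1 + (deriv f (t / 4)) ^ 2) + t * deriv f (t / 4) * deriv (deriv f) (t / 4))
        / (2 * t * Real.sqrt t * (1 + (deriv f (t / 4)) ^ 2)
            * Real.sqrt (1 + (deriv f (t / 4)) ^ 2))) * (2 * s0) := by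
  subst hct
  have hq : HasDerivAt (fun s : ℝ => s ^ 2 + c) (2 * s0) s0 := by
    simpa using (hasDerivAt_pow 2 s0).add_const c
  have := (hasDerivAt_phiF hf ht).comp s0 hq
  simpa [Function.comp_def] using this.deriv

end helpers2


lemma K0_algebra (A B a b s w : ℝ) (hs : 0 < s) (hw : 0 < w)
    (ht : s ^ 2 = A ^ 2 + B ^ 2) (hw2 : w ^ 2 = 1 + a ^ 2) :
    -(1 / (1 / 2 * s * w)) ^ 2
      - ((A - B * a) / 2 / (1 / 2 * s * w))
          * (-(2 * (1 + a ^ 2) + (A ^ 2 + B ^ 2) * a * b)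
              / (2 * (A ^ 2 + B ^ 2) * s * (1 + a ^ 2) * w) * (2 * A))
      + (-(B + A * a) / 2 / (1 / 2 * s * w))
          * (-(2 * (1 + a ^ 2) + (A ^ 2 + B ^ 2) * a * b)
              / (2 * (A ^ 2 + B ^ 2) * s * (1 + a ^ 2) * w) * (2 * B))
      = -2 / ((A ^ 2 + B ^ 2) * (1 + a ^ 2)) + a * b / (1 + a ^ 2) ^ 2 := by
  have step1 : ∀ n D : ℝ,
      -(1 / n) ^ 2 - (A - B * a) / 2 / n * (D * (2 * A))
          + -(B + A * a) / 2 / n * (D * (2 * B))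
        = -(1 / n) ^ 2 + D * (A ^ 2 + B ^ 2) * (-(1 / n)) := by
    intro n D; ring
  rw [step1, ← ht, ← hw2]
  have hsne : s ≠ 0 := hs.ne'
  have hwne : w ≠ 0 := hw.ne'
  field_simp
  ring

section K0sec
variable {f : ℝ → ℝ}

lemma K0_eq (hf : ContDiff ℝ 2 f) (x : ℝ × ℝ × ℝ) (hx : 0 < x.1 ^ 2 + x.2.1 ^ 2) :
    K0 (fun y => y.2.2 - f ((y.1 ^ 2 + y.2.1 ^ 2) / 4)) x
      = -2 / ((x.1 ^ 2 + x.2.1 ^ 2) * (1 + (deriv f ((x.1 ^ 2 + x.2.1 ^ 2) / 4)) ^ 2))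
        + deriv f ((x.1 ^ 2 + x.2.1 ^ 2) / 4) * deriv (deriv f) ((x.1 ^ 2 + x.2.1 ^ 2) / 4)
          / (1 + (deriv f ((x.1 ^ 2 + x.2.1 ^ 2) / 4)) ^ 2) ^ 2 := by
  have hd : Differentiable ℝ f := hf.differentiable (by norm_num)
  have e1 := Xu_one hd x
  have e2 := Xu_two hd x
  have e3 := Xu_three (f := f) x
  have en := normH_eq hd x
  simp only [K0]
  rw [v_eq hd, e1, e2, e3, en]
  simp only [Xone, Xtwo]
  rw [show (fun s : ℝ => phiF f (x.1 ^ 2 + s ^ 2)) = fun s : ℝ => phiF f (s ^ 2 + x.1 ^ 2)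
      from funext fun s => by rw [add_comm]]
  rw [deriv_phiF_comp hf (x.2.1 ^ 2) x.1 (x.1 ^ 2 + x.2.1 ^ 2) rfl hx,
    deriv_phiF_comp hf (x.1 ^ 2) x.2.1 (x.1 ^ 2 + x.2.1 ^ 2) (by ring) hx]
  simp only [deriv_const']
  set a := deriv f ((x.1 ^ 2 + x.2.1 ^ 2) / 4) with ha'
  set b := deriv (deriv f) ((x.1 ^ 2 + x.2.1 ^ 2) / 4) with hb'
  have hw2pos : (0 : ℝ) < 1 + a ^ 2 := by positivity
  have hs := Real.sqrt_pos.mpr hx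
  have hw := Real.sqrt_pos.mpr hw2pos
  have ht : Real.sqrt (x.1 ^ 2 + x.2.1 ^ 2) ^ 2 = x.1 ^ 2 + x.2.1 ^ 2 := Real.sq_sqrt hx.le
  have hw2 : Real.sqrt (1 + a ^ 2) ^ 2 = 1 + a ^ 2 := Real.sq_sqrt hw2pos.le
  linear_combination K0_algebra x.1 x.2.1 a b (Real.sqrt (x.1 ^ 2 + x.2.1 ^ 2))
    (Real.sqrt (1 + a ^ 2)) hs hw ht hw2
end K0sec


lemma abs_rpow_integrableOn :
    IntegrableOn (fun x : ℝ => |x| ^ (-(1 / 2) : ℝ)) (Set.Ioc (-1 : ℝ) 1) volume := by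
  have hpos : IntervalIntegrable (fun x : ℝ => x ^ (-(1 / 2) : ℝ)) volume 0 1 :=
    intervalIntegral.intervalIntegrable_rpow' (by norm_num)
  have habs1 : IntegrableOn (fun x : ℝ => |x| ^ (-(1 / 2) : ℝ)) (Set.Ioc (0 : ℝ) 1) volume := by
    refine hpos.1.congr_fun (fun x hx => ?_) measurableSet_Ioc
    rw [abs_of_pos hx.1]
  have habs : IntervalIntegrable (fun x : ℝ => |x| ^ (-(1 / 2) : ℝ)) volume 0 1 :=
    ⟨habs1, by simp [IntegrableOn, Set.Ioc_eq_empty, not_lt.mpr zero_le_one]⟩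
  have hneg : IntervalIntegrable (fun x : ℝ => |x| ^ (-(1 / 2) : ℝ)) volume (-1) 0 := by
    have := (IntervalIntegrable.iff_comp_neg (by simp)).mp habs
    simp only [abs_neg, neg_zero, neg_neg] at this
    exact this.symm
  exact (hneg.trans habs).1

lemma bound_integrableOn :
    IntegrableOn (fun p : ℝ × ℝ => (Real.sqrt 2)⁻¹ *
        (|p.1| ^ (-(1 / 2) : ℝ) * |p.2| ^ (-(1 / 2) : ℝ)))
      (Metric.ball (0 : ℝ × ℝ) 1) volume := by
  have hprod : Integrable
      (fun z : ℝ × ℝ => |z.1| ^ (-(1 / 2) : ℝ) * |z.2| ^ (-(1 / 2) : ℝ))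
      ((volume.restrict (Set.Ioc (-1 : ℝ) 1)).prod (volume.restrict (Set.Ioc (-1 : ℝ) 1))) :=
    Integrable.mul_prod abs_rpow_integrableOn abs_rpow_integrableOn
  rw [Measure.prod_restrict] at hprod
  have hsub : Metric.ball (0 : ℝ × ℝ) 1 ⊆ Set.Ioc (-1 : ℝ) 1 ×ˢ Set.Ioc (-1 : ℝ) 1 := by
    intro p hp
    rw [Metric.mem_ball, Prod.dist_eq] at hp
    simp only [Prod.fst_zero, Prod.snd_zero, Real.dist_eq, sub_zero] at hp
    have h1 : |p.1| < 1 := lt_of_le_of_lt (le_max_left _ _) hp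
    have h2 : |p.2| < 1 := lt_of_le_of_lt (le_max_right _ _) hp
    rw [abs_lt] at h1 h2
    exact ⟨⟨h1.1, h1.2.le⟩, ⟨h2.1, h2.2.le⟩⟩
  have : IntegrableOn
      (fun z : ℝ × ℝ => |z.1| ^ (-(1 / 2) : ℝ) * |z.2| ^ (-(1 / 2) : ℝ))
      (Metric.ball (0 : ℝ × ℝ) 1) volume := by
    have h1 : IntegrableOn
        (fun z : ℝ × ℝ => |z.1| ^ (-(1 / 2) : ℝ) * |z.2| ^ (-(1 / 2) : ℝ))
        (Set.Ioc (-1 : ℝ) 1 ×ˢ Set.Ioc (-1 : ℝ) 1) (volume.prod volume) := hprod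
    have := h1.mono_set hsub
    rwa [← Measure.volume_eq_prod] at this
  exact this.const_mul _

lemma lines_ae : ∀ᵐ p : ℝ × ℝ ∂volume, p.1 ≠ 0 ∧ p.2 ≠ 0 := by
  have hline1 : volume {p : ℝ × ℝ | p.1 = 0} = 0 := by
    have h : {p : ℝ × ℝ | p.1 = 0} = ({0} : Set ℝ) ×ˢ (Set.univ : Set ℝ) := by
      ext p
      constructor
      · intro hh; exact ⟨hh, Set.mem_univ _⟩
      · intro hh; exact hh.1
    rw [h, Measure.volume_eq_prod, Measure.prod_prod]; simp
  have hline2 : volume {p : ℝ × ℝ | p.2 = 0} = 0 := by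
    have h : {p : ℝ × ℝ | p.2 = 0} = (Set.univ : Set ℝ) ×ˢ ({0} : Set ℝ) := by
      ext p
      constructor
      · intro hh; exact ⟨Set.mem_univ _, hh⟩
      · intro hh; exact hh.2
    rw [h, Measure.volume_eq_prod, Measure.prod_prod]; simp
  have h1 : ∀ᵐ p : ℝ × ℝ ∂volume, p.1 ≠ 0 := by
    rw [ae_iff]; simpa [not_not] using hline1
  have h2 : ∀ᵐ p : ℝ × ℝ ∂volume, p.2 ≠ 0 := by
    rw [ae_iff]; simpa [not_not] using hline2
  exact h1.and h2

section integr
variable {f : ℝ → ℝ}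

lemma g_integrable (hf : ContDiff ℝ 2 f) :
    IntegrableOn (fun p : ℝ × ℝ =>
        (-2 / ((p.1 ^ 2 + p.2 ^ 2) * (1 + (deriv f ((p.1 ^ 2 + p.2 ^ 2) / 4)) ^ 2))
          + deriv f ((p.1 ^ 2 + p.2 ^ 2) / 4) * deriv (deriv f) ((p.1 ^ 2 + p.2 ^ 2) / 4)
            / (1 + (deriv f ((p.1 ^ 2 + p.2 ^ 2) / 4)) ^ 2) ^ 2)
        * (1 / 2 * Real.sqrt (p.1 ^ 2 + p.2 ^ 2)
            * Real.sqrt (1 + (deriv f ((p.1 ^ 2 + p.2 ^ 2) / 4)) ^ 2)))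
      (Metric.ball (0 : ℝ × ℝ) 1) volume := by
  have h2 : ContDiff ℝ (1 + 1) f := by norm_num at hf ⊢; exact hf
  have hc1 : Continuous (deriv f) :=
    ((contDiff_succ_iff_deriv.mp h2).2.2).continuous
  have hc2 : Continuous (deriv (deriv f)) :=
    (contDiff_one_iff_deriv.mp (contDiff_succ_iff_deriv.mp h2).2.2).2
  have hct : Continuous fun p : ℝ × ℝ => p.1 ^ 2 + p.2 ^ 2 :=
    (continuous_fst.pow 2).add (continuous_snd.pow 2)
  have hca : Continuous fun p : ℝ × ℝ => deriv f ((p.1 ^ 2 + p.2 ^ 2) / 4) :=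
    hc1.comp (hct.div_const 4)
  have hcb : Continuous fun p : ℝ × ℝ => deriv (deriv f) ((p.1 ^ 2 + p.2 ^ 2) / 4) :=
    hc2.comp (hct.div_const 4)
  have hcs : Continuous fun p : ℝ × ℝ => Real.sqrt (p.1 ^ 2 + p.2 ^ 2) :=
    Real.continuous_sqrt.comp hct
  have hcw : Continuous fun p : ℝ × ℝ =>
      Real.sqrt (1 + (deriv f ((p.1 ^ 2 + p.2 ^ 2) / 4)) ^ 2) :=
    Real.continuous_sqrt.comp (continuous_const.add (hca.pow 2))
  have hcC : Continuous fun p : ℝ × ℝ =>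
      1 / 2 * Real.sqrt (p.1 ^ 2 + p.2 ^ 2)
        * Real.sqrt (1 + (deriv f ((p.1 ^ 2 + p.2 ^ 2) / 4)) ^ 2) :=
    ((continuous_const.mul hcs).mul hcw)
  -- the second summand is continuous, hence integrable on the ball
  have hg2 : IntegrableOn (fun p : ℝ × ℝ =>
      deriv f ((p.1 ^ 2 + p.2 ^ 2) / 4) * deriv (deriv f) ((p.1 ^ 2 + p.2 ^ 2) / 4)
        / (1 + (deriv f ((p.1 ^ 2 + p.2 ^ 2) / 4)) ^ 2) ^ 2
      * (1 / 2 * Real.sqrt (p.1 ^ 2 + p.2 ^ 2)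
          * Real.sqrt (1 + (deriv f ((p.1 ^ 2 + p.2 ^ 2) / 4)) ^ 2)))
      (Metric.ball (0 : ℝ × ℝ) 1) volume := by
    have hcont : Continuous fun p : ℝ × ℝ =>
        deriv f ((p.1 ^ 2 + p.2 ^ 2) / 4) * deriv (deriv f) ((p.1 ^ 2 + p.2 ^ 2) / 4)
          / (1 + (deriv f ((p.1 ^ 2 + p.2 ^ 2) / 4)) ^ 2) ^ 2
        * (1 / 2 * Real.sqrt (p.1 ^ 2 + p.2 ^ 2)
            * Real.sqrt (1 + (deriv f ((p.1 ^ 2 + p.2 ^ 2) / 4)) ^ 2)) :=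
      (Continuous.div (hca.mul hcb) ((continuous_const.add (hca.pow 2)).pow 2)
        (fun p => show (1 + (deriv f ((p.1 ^ 2 + p.2 ^ 2) / 4)) ^ 2) ^ 2 ≠ 0 by positivity)).mul hcC
    exact (hcont.continuousOn.integrableOn_compact (isCompact_closedBall _ _)).mono_set
      Metric.ball_subset_closedBall
  -- the first summand is dominated by an integrable bound
  have hg1 : IntegrableOn (fun p : ℝ × ℝ =>
      -2 / ((p.1 ^ 2 + p.2 ^ 2) * (1 + (deriv f ((p.1 ^ 2 + p.2 ^ 2) / 4)) ^ 2))
      * (1 / 2 * Real.sqrt (p.1 ^ 2 + p.2 ^ 2)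
          * Real.sqrt (1 + (deriv f ((p.1 ^ 2 + p.2 ^ 2) / 4)) ^ 2)))
      (Metric.ball (0 : ℝ × ℝ) 1) volume := by
    have hmeas : Measurable fun p : ℝ × ℝ =>
        -2 / ((p.1 ^ 2 + p.2 ^ 2) * (1 + (deriv f ((p.1 ^ 2 + p.2 ^ 2) / 4)) ^ 2))
        * (1 / 2 * Real.sqrt (p.1 ^ 2 + p.2 ^ 2)
            * Real.sqrt (1 + (deriv f ((p.1 ^ 2 + p.2 ^ 2) / 4)) ^ 2)) :=
      (measurable_const.div (hct.measurable.mul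
        (continuous_const.add (hca.pow 2)).measurable)).mul hcC.measurable
    refine Integrable.mono' bound_integrableOn hmeas.aestronglyMeasurable ?_
    refine ae_restrict_of_ae (lines_ae.mono fun p hp => ?_)
    obtain ⟨hp1, hp2⟩ := hp
    have ht : (0 : ℝ) < p.1 ^ 2 + p.2 ^ 2 := by positivity
    set a := deriv f ((p.1 ^ 2 + p.2 ^ 2) / 4) with ha'
    have hw2pos : (0 : ℝ) < 1 + a ^ 2 := by positivity
    set s := Real.sqrt (p.1 ^ 2 + p.2 ^ 2) with hs'
    set w := Real.sqrt (1 + a ^ 2) with hw'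
    have hspos : 0 < s := Real.sqrt_pos.mpr ht
    have hwpos : 0 < w := Real.sqrt_pos.mpr hw2pos
    have hs2 : s ^ 2 = p.1 ^ 2 + p.2 ^ 2 := Real.sq_sqrt ht.le
    have hw2 : w ^ 2 = 1 + a ^ 2 := Real.sq_sqrt hw2pos.le
    have hval : -2 / ((p.1 ^ 2 + p.2 ^ 2) * (1 + a ^ 2)) * (1 / 2 * s * w)
        = -(1 / (s * w)) := by
      rw [← hs2, ← hw2]
      field_simp
    rw [hval, norm_neg, Real.norm_eq_abs, abs_of_pos (by positivity)]
    have hw1 : 1 ≤ w := by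
      have h := Real.sqrt_le_sqrt (show (1 : ℝ) ≤ 1 + a ^ 2 by nlinarith)
      rwa [Real.sqrt_one] at h
    have step1 : 1 / (s * w) ≤ 1 / s := by
      apply one_div_le_one_div_of_le hspos
      nlinarith
    have habs : 2 * |p.1| * |p.2| ≤ p.1 ^ 2 + p.2 ^ 2 := by
      nlinarith [sq_nonneg (|p.1| - |p.2|), sq_abs p.1, sq_abs p.2]
    have h2pos : (0 : ℝ) < 2 * |p.1| * |p.2| := by
      have := abs_pos.mpr hp1; have := abs_pos.mpr hp2; positivity
    have step2 : 1 / s ≤ 1 / Real.sqrt (2 * |p.1| * |p.2|) := by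
      apply one_div_le_one_div_of_le (Real.sqrt_pos.mpr h2pos)
      exact Real.sqrt_le_sqrt habs
    have hrw : (Real.sqrt 2)⁻¹ * (|p.1| ^ (-(1 / 2) : ℝ) * |p.2| ^ (-(1 / 2) : ℝ))
        = 1 / Real.sqrt (2 * |p.1| * |p.2|) := by
      rw [Real.rpow_neg (abs_nonneg _), Real.rpow_neg (abs_nonneg _),
        ← Real.sqrt_eq_rpow, ← Real.sqrt_eq_rpow,
        Real.sqrt_mul (by positivity), Real.sqrt_mul (by norm_num : (0:ℝ) ≤ 2)]
      field_simp
    rw [hrw]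
    exact le_trans step1 step2
  have := hg1.add hg2
  refine this.congr (Filter.Eventually.of_forall fun p => ?_)
  simp only [Pi.add_apply]
  ring

end integr

/-- For the surface of revolution `{x₃ = f((x₁²+x₂²)/4)}` with `f ∈ C²` and
`u = x₃ - f(r)`, `r = (x₁²+x₂²)/4`: the horizontal gradient norm is
`½√(x₁²+x₂²)·√(1+f'(r)²)`, the sub-Riemannian Gaussian curvature is
`-2/((x₁²+x₂²)(1+f'(r)²)) + f'f''/(1+f'(r)²)²` away from the axis, and
`𝒦₀` is locally integrable near the isolated characteristic point at the
origin with respect to the Heisenberg perimeter measure (formulated via the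
graph parametrization, whose perimeter-measure density is `‖∇_Hu‖`). -/
theorem stmt16 (f : ℝ → ℝ) (hf : ContDiff ℝ 2 f) :
    (∀ x : ℝ × ℝ × ℝ, 0 < x.1 ^ 2 + x.2.1 ^ 2 →
      normH (fun y => y.2.2 - f ((y.1 ^ 2 + y.2.1 ^ 2) / 4)) x
        = (1 / 2) * Real.sqrt (x.1 ^ 2 + x.2.1 ^ 2)
            * Real.sqrt (1 + (deriv f ((x.1 ^ 2 + x.2.1 ^ 2) / 4)) ^ 2)) ∧
    (∀ x : ℝ × ℝ × ℝ, 0 < x.1 ^ 2 + x.2.1 ^ 2 →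
      K0 (fun y => y.2.2 - f ((y.1 ^ 2 + y.2.1 ^ 2) / 4)) x
        = -2 / ((x.1 ^ 2 + x.2.1 ^ 2)
              * (1 + (deriv f ((x.1 ^ 2 + x.2.1 ^ 2) / 4)) ^ 2))
          + deriv f ((x.1 ^ 2 + x.2.1 ^ 2) / 4)
              * deriv (deriv f) ((x.1 ^ 2 + x.2.1 ^ 2) / 4)
            / (1 + (deriv f ((x.1 ^ 2 + x.2.1 ^ 2) / 4)) ^ 2) ^ 2) ∧
    (∃ ε > 0, IntegrableOn
      (fun p : ℝ × ℝ =>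
        K0 (fun y => y.2.2 - f ((y.1 ^ 2 + y.2.1 ^ 2) / 4))
            (p.1, p.2, f ((p.1 ^ 2 + p.2 ^ 2) / 4))
          * normH (fun y => y.2.2 - f ((y.1 ^ 2 + y.2.1 ^ 2) / 4))
            (p.1, p.2, f ((p.1 ^ 2 + p.2 ^ 2) / 4)))
      (Metric.ball (0 : ℝ × ℝ) ε) volume) := by
  have hd : Differentiable ℝ f := hf.differentiable (by norm_num)
  refine ⟨fun x _ => normH_eq hd x, fun x hx => K0_eq hf x hx, 1, one_pos, ?_⟩
  have hpne : ∀ᵐ p : ℝ × ℝ ∂volume, p ≠ 0 := by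
    rw [ae_iff]
    have h : {p : ℝ × ℝ | ¬ p ≠ 0} = {(0 : ℝ × ℝ)} := by ext p; simp
    rw [h]
    exact measure_singleton _
  refine (g_integrable hf).congr (ae_restrict_of_ae (hpne.mono fun p hp => ?_))
  have hpos : 0 < p.1 ^ 2 + p.2 ^ 2 := by
    have hor : p.1 ≠ 0 ∨ p.2 ≠ 0 := by
      by_contra h
      push_neg at h
      exact hp (Prod.ext h.1 h.2)
    rcases hor with h | h
    · positivity
    · positivity
  have e1 := K0_eq hf (p.1, p.2, f ((p.1 ^ 2 + p.2 ^ 2) / 4)) (by simpa using hpos)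
  have e2 := normH_eq hd (p.1, p.2, f ((p.1 ^ 2 + p.2 ^ 2) / 4))
  simp only [e1, e2]
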